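/- (Theorem 1.4.) Let T > 0 and let (u,z,m) be a C² solution of the system on an open set containing [0,T] × ℝ, with constants 0 < Z_L < z < Z_U and 0 < M₁ < m < M₂ on [0,T] × ℝ, and let δ > 0 satisfy −a₂(t,x) ≥ δ for all (t,x) ∈ [0,T] × ℝ. Suppose there is A ∈ ℝ such that the initial entropy profile satisfies (x ↦ m(0,x)^(−2/(3γ−1)))''(x) ≥ 0 for all x > A, and suppose y₀ := y(0,A*) < 0 at some point A* > A. Then T < −1/(y₀·δ); in other words, |u_x| and/or |τ_x| blow up before the finite time T* = −1/(y₀·δ). -/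

import Mathlib

open Real

/-- Partial derivative with respect to `t` (the first coordinate). -/
noncomputable def pdt (f : ℝ × ℝ → ℝ) (pt : ℝ × ℝ) : ℝ := fderiv ℝ f pt (1, 0)

/-- Partial derivative with respect to `x` (the second coordinate). -/
noncomputable def pdx (f : ℝ × ℝ → ℝ) (pt : ℝ × ℝ) : ℝ := fderiv ℝ f pt (0, 1)

set_option maxHeartbeats 4000000

lemma diff2_at {W : Set (ℝ × ℝ)} (hW : IsOpen W) {f : ℝ × ℝ → ℝ}
    (hf : ContDiffOn ℝ 2 f W) {pt : ℝ × ℝ} (hpt : pt ∈ W) : DifferentiableAt ℝ f pt :=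
  (hf.contDiffAt (hW.mem_nhds hpt)).differentiableAt two_ne_zero

lemma fderiv_diff_at {W : Set (ℝ × ℝ)} (hW : IsOpen W) {f : ℝ × ℝ → ℝ}
    (hf : ContDiffOn ℝ 2 f W) {pt : ℝ × ℝ} (hpt : pt ∈ W) :
    DifferentiableAt ℝ (fderiv ℝ f) pt :=
  (((hf.contDiffAt (hW.mem_nhds hpt)).fderiv_right (m := 1) one_add_one_eq_two.le).differentiableAt one_ne_zero)

lemma pdv_diff_at {W : Set (ℝ × ℝ)} (hW : IsOpen W) {f : ℝ × ℝ → ℝ}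
    (hf : ContDiffOn ℝ 2 f W) {pt : ℝ × ℝ} (hpt : pt ∈ W) (v : ℝ × ℝ) :
    DifferentiableAt ℝ (fun p => fderiv ℝ f p v) pt :=
  (ContinuousLinearMap.apply ℝ ℝ v).differentiableAt.comp pt (fderiv_diff_at hW hf hpt)

lemma pd_symm {W : Set (ℝ × ℝ)} (hW : IsOpen W) {f : ℝ × ℝ → ℝ}
    (hf : ContDiffOn ℝ 2 f W) {pt : ℝ × ℝ} (hpt : pt ∈ W) (v w : ℝ × ℝ) :
    fderiv ℝ (fun p => fderiv ℝ f p v) pt w = fderiv ℝ (fun p => fderiv ℝ f p w) pt v := by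
  have hd := fderiv_diff_at hW hf hpt
  have hev : ∀ᶠ y in nhds pt, HasFDerivAt f (fderiv ℝ f y) y := by
    filter_upwards [hW.mem_nhds hpt] with y hy using (diff2_at hW hf hy).hasFDerivAt
  have hsymm := second_derivative_symmetric_of_eventually hev hd.hasFDerivAt
  have hcomp : ∀ a : ℝ × ℝ, fderiv ℝ (fun p => fderiv ℝ f p a) pt
      = (ContinuousLinearMap.apply ℝ ℝ a).comp (fderiv ℝ (fderiv ℝ f) pt) := by
    intro a
    exact ((ContinuousLinearMap.apply ℝ ℝ a).hasFDerivAt.comp pt hd.hasFDerivAt).fderiv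
  rw [hcomp, hcomp]
  simp only [ContinuousLinearMap.coe_comp', Function.comp_apply,
    ContinuousLinearMap.apply_apply]
  exact hsymm w v

/-- Theorem 1.4: if the initial entropy profile satisfies
`(m^(−2/(3γ−1)))_{xx} ≥ 0` for `x > A` and `y₀ = y(0,A*) < 0` with `A* > A`,
then a smooth solution cannot exist up to time `T ≥ −1/(y₀·δ)`, where
`δ > 0` is a lower bound for `−a₂` on `[0,T] × ℝ`. -/
theorem stmt_15 (γ Kc : ℝ) (hγ : 1 < γ) (hKc : 0 < Kc)
    (T : ℝ) (hT : 0 < T)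
    (W : Set (ℝ × ℝ)) (hW : IsOpen W) (hWT : Set.Icc (0 : ℝ) T ×ˢ (Set.univ : Set ℝ) ⊆ W)
    (u z m : ℝ × ℝ → ℝ)
    (hu : ContDiffOn ℝ 2 u W) (hz : ContDiffOn ℝ 2 z W) (hm : ContDiffOn ℝ 2 m W)
    (hzpos : ∀ pt ∈ W, 0 < z pt) (hmpos : ∀ pt ∈ W, 0 < m pt)
    (c p : ℝ × ℝ → ℝ)
    (hc : c = fun pt => Kc * m pt * z pt ^ ((γ + 1) / (γ - 1)))
    (hp : p = fun pt => ((γ - 1) / (2 * γ) * Kc) * (m pt) ^ 2 * z pt ^ (2 * γ / (γ - 1)))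
    (heq1 : ∀ pt ∈ W, pdt z pt + (c pt / m pt) * pdx u pt = 0)
    (heq2 : ∀ pt ∈ W, pdt u pt + m pt * c pt * pdx z pt + 2 * (p pt / m pt) * pdx m pt = 0)
    (heq3 : ∀ pt ∈ W, pdt m pt = 0)
    (ZL ZU M1 M2 : ℝ) (hZL : 0 < ZL) (hM1 : 0 < M1)
    (hbounds : ∀ pt ∈ Set.Icc (0 : ℝ) T ×ˢ (Set.univ : Set ℝ),
      ZL < z pt ∧ z pt < ZU ∧ M1 < m pt ∧ m pt < M2)
    (α yt yf a2 : ℝ × ℝ → ℝ)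
    (hα : α = fun pt => pdx u pt + m pt * pdx z pt + ((γ - 1) / γ) * pdx m pt * z pt)
    (hyt : yt = fun pt => z pt ^ ((γ + 1) / (2 * (γ - 1))) * α pt
      + ((γ - 1) / (γ * (3 * γ - 1))) * z pt ^ ((γ + 1) / (2 * (γ - 1)) + 1) * pdx m pt)
    (hyf : yf = fun pt => m pt ^ (-(3 * (3 - γ)) / (2 * (3 * γ - 1))) * yt pt)
    (ha2 : a2 = fun pt => -Kc * ((γ + 1) / (2 * (γ - 1))) * m pt ^ (3 * (3 - γ) / (2 * (3 * γ - 1)))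
      * z pt ^ ((γ + 1) / (2 * (γ - 1)) - 1))
    (δ : ℝ) (hδ : 0 < δ)
    (hδa2 : ∀ pt ∈ Set.Icc (0 : ℝ) T ×ˢ (Set.univ : Set ℝ), δ ≤ -a2 pt)
    (A Astar : ℝ) (hAstar : A < Astar)
    (hentropy : ∀ x : ℝ, A < x →
      0 ≤ deriv (deriv (fun s : ℝ => m (0, s) ^ (-2 / (3 * γ - 1)))) x)
    (hy0 : yf (0, Astar) < 0) :
    T < -(1 / (yf (0, Astar) * δ)) := by
  have hγ1 : (0:ℝ) < γ - 1 := by linarith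
  have hγ0 : (0:ℝ) < γ := by linarith
  have h3γ : (0:ℝ) < 3 * γ - 1 := by linarith
  set b : ℝ := (γ + 1) / (2 * (γ - 1)) with hbdef
  set k1 : ℝ := (γ - 1) / γ with hk1def
  set k2 : ℝ := (γ - 1) / (γ * (3 * γ - 1)) with hk2def
  set eE : ℝ := -(3 * (3 - γ)) / (2 * (3 * γ - 1)) with heEdef
  set κ : ℝ := -2 / (3 * γ - 1) with hκdef
  have hyfF : yf = fun q => m q ^ eE * (z q ^ b * (pdx u q + m q * pdx z q + k1 * pdx m q * z q)
      + k2 * z q ^ (b + 1) * pdx m q) := by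
    rw [hyf, hyt, hα]
  -- pointwise PDE rearrangements
  have hW1 : ∀ q ∈ W, pdt z q = -(Kc * z q ^ ((γ + 1) / (γ - 1)) * pdx u q) := by
    intro q hq
    have h := heq1 q hq
    have hMq := (hmpos q hq).ne'
    have hcm : c q / m q = Kc * z q ^ ((γ + 1) / (γ - 1)) := by
      rw [hc]; field_simp
    rw [hcm] at h
    linarith
  have hW2 : ∀ q ∈ W, pdt u q = -(Kc * (m q * m q) * z q ^ ((γ + 1) / (γ - 1)) * pdx z q
      + k1 * Kc * (m q * z q ^ (2 * γ / (γ - 1))) * pdx m q) := by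
    intro q hq
    have h := heq2 q hq
    have hMq := (hmpos q hq).ne'
    have h1 : m q * c q = Kc * (m q * m q) * z q ^ ((γ + 1) / (γ - 1)) := by
      rw [hc]; ring
    have h2 : 2 * (p q / m q) = k1 * Kc * (m q * z q ^ (2 * γ / (γ - 1))) := by
      rw [hp, hk1def]; field_simp
    rw [h1, h2] at h
    linarith
  -- Part I : the Riccati identity
  have key1 : ∀ pt ∈ W, pdt yf pt + c pt * pdx yf pt
      = a2 pt * yf pt ^ 2
        - ((γ - 1) / (2 * γ) * Kc * (m pt * m pt * m pt ^ eE / m pt ^ κ)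
            * (z pt ^ b * z pt ^ b * z pt ^ b * z pt))
          * (κ * m pt ^ (κ - 1) * fderiv ℝ (pdx m) pt (0, 1)
            + κ * (κ - 1) * m pt ^ (κ - 2) * pdx m pt ^ 2) := by
    intro pt hpt
    have hZ : 0 < z pt := hzpos pt hpt
    have hM : 0 < m pt := hmpos pt hpt
    have hdz := diff2_at hW hz hpt
    have hdm := diff2_at hW hm hpt
    have hdux : DifferentiableAt ℝ (pdx u) pt := pdv_diff_at hW hu hpt (0, 1)
    have hdzx : DifferentiableAt ℝ (pdx z) pt := pdv_diff_at hW hz hpt (0, 1)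
    have hdmx : DifferentiableAt ℝ (pdx m) pt := pdv_diff_at hW hm hpt (0, 1)
    have Hz := hdz.hasFDerivAt
    have Hm := hdm.hasFDerivAt
    have Hux := hdux.hasFDerivAt
    have Hzx := hdzx.hasFDerivAt
    have Hmx := hdmx.hasFDerivAt
    have cz : fderiv ℝ z pt (0, 1) = pdx z pt := rfl
    have cm : fderiv ℝ m pt (0, 1) = pdx m pt := rfl
    have cu : fderiv ℝ u pt (0, 1) = pdx u pt := rfl
    -- the x-derivative of yf (and of its building blocks), as HasFDerivAt
    have HYf : HasFDerivAt (fun q => m q ^ eE * (z q ^ b * (pdx u q + m q * pdx z q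
        + k1 * pdx m q * z q) + k2 * z q ^ (b + 1) * pdx m q)) _ pt :=
      (Hm.rpow_const (Or.inl hM.ne')).mul
        (((Hz.rpow_const (Or.inl hZ.ne')).mul
            ((Hux.add (Hm.mul Hzx)).add ((Hmx.const_mul k1).mul Hz))).add
          (((Hz.rpow_const (Or.inl hZ.ne')).const_mul k2).mul Hmx))
    have EYt : pdt yf pt = eE * m pt ^ (eE - 1) * fderiv ℝ m pt (1, 0)
          * (z pt ^ b * (pdx u pt + m pt * pdx z pt + k1 * pdx m pt * z pt)
              + k2 * z pt ^ (b + 1) * pdx m pt)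
        + m pt ^ eE * (b * z pt ^ (b - 1) * fderiv ℝ z pt (1, 0)
              * (pdx u pt + m pt * pdx z pt + k1 * pdx m pt * z pt)
            + z pt ^ b * (fderiv ℝ (pdx u) pt (1, 0)
              + (fderiv ℝ m pt (1, 0) * pdx z pt + m pt * fderiv ℝ (pdx z) pt (1, 0))
              + k1 * (fderiv ℝ (pdx m) pt (1, 0) * z pt + pdx m pt * fderiv ℝ z pt (1, 0)))
            + k2 * ((b + 1) * z pt ^ b * fderiv ℝ z pt (1, 0) * pdx m pt
              + z pt ^ (b + 1) * fderiv ℝ (pdx m) pt (1, 0))) := by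
      show fderiv ℝ yf pt (1, 0) = _
      rw [hyfF, HYf.fderiv]
      simp only [ContinuousLinearMap.add_apply, ContinuousLinearMap.smul_apply, smul_eq_mul,
        Pi.add_apply, Pi.mul_apply]
      rw [show b + 1 - 1 = b from by ring]
      ring
    have EYx : pdx yf pt = eE * m pt ^ (eE - 1) * pdx m pt
          * (z pt ^ b * (pdx u pt + m pt * pdx z pt + k1 * pdx m pt * z pt)
              + k2 * z pt ^ (b + 1) * pdx m pt)
        + m pt ^ eE * (b * z pt ^ (b - 1) * pdx z pt
              * (pdx u pt + m pt * pdx z pt + k1 * pdx m pt * z pt)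
            + z pt ^ b * (fderiv ℝ (pdx u) pt (0, 1)
              + (pdx m pt * pdx z pt + m pt * fderiv ℝ (pdx z) pt (0, 1))
              + k1 * (fderiv ℝ (pdx m) pt (0, 1) * z pt + pdx m pt * pdx z pt))
            + k2 * ((b + 1) * z pt ^ b * pdx z pt * pdx m pt
              + z pt ^ (b + 1) * fderiv ℝ (pdx m) pt (0, 1))) := by
      show fderiv ℝ yf pt (0, 1) = _
      rw [hyfF, HYf.fderiv]
      simp only [ContinuousLinearMap.add_apply, ContinuousLinearMap.smul_apply, smul_eq_mul,
        Pi.add_apply, Pi.mul_apply]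
      rw [show b + 1 - 1 = b from by ring]
      simp only [cz, cm, cu]
      ring
    -- mixed second derivatives via symmetry and the PDEs
    have hMXT : fderiv ℝ (pdx m) pt (1, 0) = 0 := by
      have e1 : pdx m = fun q => fderiv ℝ m q (0, 1) := rfl
      rw [e1, pd_symm hW hm hpt (0, 1) (1, 0)]
      have hev : (fun q => fderiv ℝ m q (1, 0)) =ᶠ[nhds pt] (fun _ => (0 : ℝ)) := by
        filter_upwards [hW.mem_nhds hpt] with q hq using heq3 q hq
      rw [hev.fderiv_eq]
      simp
    have hZXT : fderiv ℝ (pdx z) pt (1, 0)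
        = -(Kc * ((γ + 1) / (γ - 1) * z pt ^ ((γ + 1) / (γ - 1) - 1) * pdx z pt) * pdx u pt
          + Kc * z pt ^ ((γ + 1) / (γ - 1)) * fderiv ℝ (pdx u) pt (0, 1)) := by
      have e1 : pdx z = fun q => fderiv ℝ z q (0, 1) := rfl
      rw [e1, pd_symm hW hz hpt (0, 1) (1, 0)]
      have hev : (fun q => fderiv ℝ z q (1, 0))
          =ᶠ[nhds pt] (fun q => -(Kc * z q ^ ((γ + 1) / (γ - 1)) * pdx u q)) := by
        filter_upwards [hW.mem_nhds hpt] with q hq using hW1 q hq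
      rw [hev.fderiv_eq]
      have HG1 : HasFDerivAt (fun q => -(Kc * z q ^ ((γ + 1) / (γ - 1)) * pdx u q)) _ pt :=
        (((Hz.rpow_const (Or.inl hZ.ne')).const_mul Kc).mul Hux).neg
      rw [HG1.fderiv]
      simp only [ContinuousLinearMap.neg_apply, ContinuousLinearMap.add_apply,
        ContinuousLinearMap.smul_apply, smul_eq_mul]
      simp only [cz, cm, cu]
      ring
    have hUXT : fderiv ℝ (pdx u) pt (1, 0)
        = -(Kc * ((pdx m pt * m pt + m pt * pdx m pt) * z pt ^ ((γ + 1) / (γ - 1))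
              + (m pt * m pt) * ((γ + 1) / (γ - 1) * z pt ^ ((γ + 1) / (γ - 1) - 1) * pdx z pt))
              * pdx z pt
            + Kc * (m pt * m pt) * z pt ^ ((γ + 1) / (γ - 1)) * fderiv ℝ (pdx z) pt (0, 1)
          + k1 * Kc * ((pdx m pt * z pt ^ (2 * γ / (γ - 1))
              + m pt * (2 * γ / (γ - 1) * z pt ^ (2 * γ / (γ - 1) - 1) * pdx z pt)) * pdx m pt
            + (m pt * z pt ^ (2 * γ / (γ - 1))) * fderiv ℝ (pdx m) pt (0, 1))) := by
      have e1 : pdx u = fun q => fderiv ℝ u q (0, 1) := rfl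
      rw [e1, pd_symm hW hu hpt (0, 1) (1, 0)]
      have hev : (fun q => fderiv ℝ u q (1, 0))
          =ᶠ[nhds pt] (fun q => -(Kc * (m q * m q) * z q ^ ((γ + 1) / (γ - 1)) * pdx z q
            + k1 * Kc * (m q * z q ^ (2 * γ / (γ - 1))) * pdx m q)) := by
        filter_upwards [hW.mem_nhds hpt] with q hq using hW2 q hq
      rw [hev.fderiv_eq]
      have HG2 : HasFDerivAt (fun q => -(Kc * (m q * m q) * z q ^ ((γ + 1) / (γ - 1)) * pdx z q
          + k1 * Kc * (m q * z q ^ (2 * γ / (γ - 1))) * pdx m q)) _ pt :=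
        (((((Hm.mul Hm).const_mul Kc).mul (Hz.rpow_const (Or.inl hZ.ne'))).mul Hzx).add
          (((Hm.mul (Hz.rpow_const (Or.inl hZ.ne'))).const_mul (k1 * Kc)).mul Hmx)).neg
      rw [HG2.fderiv]
      simp only [ContinuousLinearMap.neg_apply, ContinuousLinearMap.add_apply,
        ContinuousLinearMap.smul_apply, smul_eq_mul, Pi.add_apply, Pi.mul_apply]
      simp only [cz, cm, cu]
      ring
    have hZT : fderiv ℝ z pt (1, 0) = -(Kc * z pt ^ ((γ + 1) / (γ - 1)) * pdx u pt) :=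
      hW1 pt hpt
    have hMT : fderiv ℝ m pt (1, 0) = 0 := heq3 pt hpt
    have hMκ := (Real.rpow_pos_of_pos hM κ).ne'
    have hMe := (Real.rpow_pos_of_pos hM eE).ne'
    have cv1 : z pt ^ ((γ + 1) / (γ - 1)) = z pt ^ b * z pt ^ b := by
      rw [← Real.rpow_add hZ]; congr 1; rw [hbdef]; field_simp; ring
    have cv2 : z pt ^ ((γ + 1) / (γ - 1) - 1) = z pt ^ b * z pt ^ b / z pt := by
      rw [Real.rpow_sub hZ, cv1, Real.rpow_one]
    have cv3 : z pt ^ (2 * γ / (γ - 1)) = z pt ^ b * z pt ^ b * z pt := by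
      rw [show 2 * γ / (γ - 1) = (γ + 1) / (γ - 1) + 1 from by field_simp; ring,
        Real.rpow_add hZ, Real.rpow_one, cv1]
    have cv4 : z pt ^ (2 * γ / (γ - 1) - 1) = z pt ^ b * z pt ^ b := by
      rw [Real.rpow_sub hZ, cv3, Real.rpow_one]
      field_simp
    have cv5 : z pt ^ (b + 1) = z pt ^ b * z pt := by rw [Real.rpow_add hZ, Real.rpow_one]
    have cv6 : z pt ^ (b - 1) = z pt ^ b / z pt := by rw [Real.rpow_sub hZ, Real.rpow_one]
    have cv7 : m pt ^ (eE - 1) = m pt ^ eE / m pt := by rw [Real.rpow_sub hM, Real.rpow_one]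
    have cv8 : m pt ^ (3 * (3 - γ) / (2 * (3 * γ - 1))) = (m pt ^ eE)⁻¹ := by
      rw [show 3 * (3 - γ) / (2 * (3 * γ - 1)) = -eE from by rw [heEdef]; ring,
        Real.rpow_neg hM.le]
    have cv9 : m pt ^ (κ - 1) = m pt ^ κ / m pt := by rw [Real.rpow_sub hM, Real.rpow_one]
    have cv10 : m pt ^ (κ - 2) = m pt ^ κ / (m pt * m pt) := by
      rw [show κ - 2 = κ - 1 - 1 from by ring, Real.rpow_sub hM, Real.rpow_sub hM,
        Real.rpow_one]
      ring
    rw [EYt, EYx, hMT, hZT, hMXT, hZXT, hUXT]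
    simp only [hyfF, ha2, hc]
    rw [cv1, cv2, cv3, cv4, cv5, cv6, cv7, cv8, cv9, cv10]
    rw [hbdef, hk1def, hk2def, heEdef, hκdef]
    field_simp
    ring
  -- membership and line helpers
  have hmemTW : ∀ t' : ℝ, t' ∈ Set.Icc (0:ℝ) T → ∀ x : ℝ, ((t', x) : ℝ × ℝ) ∈ W := by
    intro t' ht' x
    exact hWT (Set.mem_prod.2 ⟨ht', Set.mem_univ _⟩)
  have h0T : (0:ℝ) ∈ Set.Icc (0:ℝ) T := ⟨le_refl 0, hT.le⟩
  have hlineX : ∀ t' s : ℝ, HasDerivAt (fun x : ℝ => ((t', x) : ℝ × ℝ)) (0, 1) s :=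
    fun t' s => HasDerivAt.prodMk (hasDerivAt_const s t') (hasDerivAt_id s)
  have hlineT : ∀ x τ : ℝ, HasDerivAt (fun s : ℝ => ((s, x) : ℝ × ℝ)) (1, 0) τ :=
    fun x τ => HasDerivAt.prodMk (hasDerivAt_id τ) (hasDerivAt_const τ x)
  -- m is time-independent along [0,T]
  have hDm0 : ∀ x : ℝ, ∀ τ ∈ Set.Icc (0:ℝ) T, HasDerivAt (fun s : ℝ => m (s, x)) 0 τ := by
    intro x τ hτ
    have h0 : fderiv ℝ m (τ, x) (1, 0) = 0 := heq3 _ (hmemTW τ hτ x)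
    have hcd : HasDerivAt (fun s : ℝ => m (s, x)) (fderiv ℝ m (τ, x) (1, 0)) τ :=
      (diff2_at hW hm (hmemTW τ hτ x)).hasFDerivAt.comp_hasDerivAt τ (hlineT x τ)
    rwa [h0] at hcd
  have E1 : ∀ x : ℝ, ∀ t' ∈ Set.Icc (0:ℝ) T, m (t', x) = m (0, x) := by
    intro x t' ht'
    refine constant_of_has_deriv_right_zero (f := fun s : ℝ => m (s, x)) (a := 0) (b := T)
      (fun τ hτ => (hDm0 x τ hτ).continuousAt.continuousWithinAt)
      (fun τ hτ => (hDm0 x τ (Set.Ico_subset_Icc_self hτ)).hasDerivWithinAt) t' ht'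
  have hmx' : ∀ t' ∈ Set.Icc (0:ℝ) T, ∀ s : ℝ,
      HasDerivAt (fun x : ℝ => m (t', x)) (pdx m (t', s)) s := by
    intro t' ht' s
    exact (diff2_at hW hm (hmemTW t' ht' s)).hasFDerivAt.comp_hasDerivAt s (hlineX t' s)
  have E2 : ∀ t' ∈ Set.Icc (0:ℝ) T, ∀ s : ℝ, pdx m (t', s) = pdx m (0, s) := by
    intro t' ht' s
    have hd1 := (hmx' t' ht' s).deriv
    have hfe : (fun x : ℝ => m (t', x)) = (fun x : ℝ => m (0, x)) :=
      funext fun x => E1 x t' ht'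
    rw [hfe, (hmx' 0 h0T s).deriv] at hd1
    exact hd1.symm
  have hmxx' : ∀ t' ∈ Set.Icc (0:ℝ) T, ∀ s : ℝ,
      HasDerivAt (fun x : ℝ => pdx m (t', x)) (fderiv ℝ (pdx m) (t', s) (0, 1)) s := by
    intro t' ht' s
    exact (pdv_diff_at hW hm (hmemTW t' ht' s) (0, 1)).hasFDerivAt.comp_hasDerivAt s (hlineX t' s)
  -- Part I' : entropy term is nonnegative for x > A
  have key2 : ∀ t' ∈ Set.Icc (0:ℝ) T, ∀ x : ℝ, A < x →
      0 ≤ κ * m (t', x) ^ (κ - 1) * fderiv ℝ (pdx m) (t', x) (0, 1)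
        + κ * (κ - 1) * m (t', x) ^ (κ - 2) * pdx m (t', x) ^ 2 := by
    intro t' ht' x hx
    have hm0 : ∀ s : ℝ, 0 < m (0, s) := fun s => hmpos _ (hmemTW 0 h0T s)
    have hD1 : deriv (fun s : ℝ => m (0, s) ^ κ)
        = fun s : ℝ => pdx m (0, s) * κ * m (0, s) ^ (κ - 1) := by
      funext s
      exact ((hmx' 0 h0T s).rpow_const (Or.inl (hm0 s).ne')).deriv
    have hD2 : HasDerivAt (fun s : ℝ => pdx m (0, s) * κ * m (0, s) ^ (κ - 1))
        (fderiv ℝ (pdx m) (0, x) (0, 1) * κ * m (0, x) ^ (κ - 1)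
          + pdx m (0, x) * κ * (pdx m (0, x) * (κ - 1) * m (0, x) ^ (κ - 1 - 1))) x :=
      ((hmxx' 0 h0T x).mul_const κ).mul ((hmx' 0 h0T x).rpow_const (Or.inl (hm0 x).ne'))
    have hE := hentropy x hx
    rw [hD1, hD2.deriv] at hE
    have e1 : m (t', x) = m (0, x) := E1 x t' ht'
    have e2 : pdx m (t', x) = pdx m (0, x) := E2 t' ht' x
    have e3 : fderiv ℝ (pdx m) (t', x) (0, 1) = fderiv ℝ (pdx m) (0, x) (0, 1) := by
      have hd := (hmxx' t' ht' x).deriv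
      have hfe : (fun s : ℝ => pdx m (t', s)) = (fun s : ℝ => pdx m (0, s)) :=
        funext fun s => E2 t' ht' s
      rw [hfe, (hmxx' 0 h0T x).deriv] at hd
      exact hd.symm
    rw [e1, e2, e3, show κ - 2 = κ - 1 - 1 from by ring]
    exact le_of_le_of_eq hE (by ring)
  -- differentiability of yf on W
  have key3 : ∀ pt ∈ W, DifferentiableAt ℝ yf pt := by
    intro pt hpt
    have hZ : 0 < z pt := hzpos pt hpt
    have hM : 0 < m pt := hmpos pt hpt
    have hdz := diff2_at hW hz hpt
    have hdm := diff2_at hW hm hpt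
    have hdux : DifferentiableAt ℝ (pdx u) pt := pdv_diff_at hW hu hpt (0, 1)
    have hdzx : DifferentiableAt ℝ (pdx z) pt := pdv_diff_at hW hz hpt (0, 1)
    have hdmx : DifferentiableAt ℝ (pdx m) pt := pdv_diff_at hW hm hpt (0, 1)
    rw [hyfF]
    exact (hdm.rpow_const (Or.inl hM.ne')).mul
      (((hdz.rpow_const (Or.inl hZ.ne')).mul
          ((hdux.add (hdm.mul hdzx)).add ((hdmx.const_mul k1).mul hdz))).add
        (((hdz.rpow_const (Or.inl hZ.ne')).const_mul k2).mul hdmx))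
  -- Part II : the forward characteristic
  have hq0 : (0:ℝ) ≤ (γ + 1) / (γ - 1) := by positivity
  have hZU : (0:ℝ) < ZU := lt_trans (hzpos _ (hmemTW 0 h0T 0))
    ((hbounds (0, 0) (Set.mem_prod.2 ⟨h0T, Set.mem_univ _⟩)).2.1)
  have hM2 : (0:ℝ) < M2 := lt_trans (hmpos _ (hmemTW 0 h0T 0))
    ((hbounds (0, 0) (Set.mem_prod.2 ⟨h0T, Set.mem_univ _⟩)).2.2.2)
  have hCB0 : (0:ℝ) < Kc * M2 * ZU ^ ((γ + 1) / (γ - 1)) := by positivity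
  have hcpos : ∀ pt ∈ W, 0 < c pt := by
    intro pt hpt
    simp only [hc]
    have := hzpos pt hpt
    have := hmpos pt hpt
    positivity
  have hCB : ∀ t' ∈ Set.Icc (0:ℝ) T, ∀ x : ℝ,
      c (t', x) ≤ Kc * M2 * ZU ^ ((γ + 1) / (γ - 1)) := by
    intro t' ht' x
    have hb := hbounds (t', x) (Set.mem_prod.2 ⟨ht', Set.mem_univ _⟩)
    have hz0 : 0 < z (t', x) := hzpos _ (hmemTW t' ht' x)
    have hm0 : 0 < m (t', x) := hmpos _ (hmemTW t' ht' x)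
    have h1 : z (t', x) ^ ((γ + 1) / (γ - 1)) ≤ ZU ^ ((γ + 1) / (γ - 1)) :=
      Real.rpow_le_rpow hz0.le hb.2.1.le hq0
    have h2 : (0:ℝ) < z (t', x) ^ ((γ + 1) / (γ - 1)) := Real.rpow_pos_of_pos hz0 _
    simp only [hc]
    calc Kc * m (t', x) * z (t', x) ^ ((γ + 1) / (γ - 1))
        ≤ Kc * M2 * z (t', x) ^ ((γ + 1) / (γ - 1)) := by
          nlinarith [mul_pos (mul_pos hKc h2) (sub_pos.2 hb.2.2.2)]
      _ ≤ Kc * M2 * ZU ^ ((γ + 1) / (γ - 1)) := by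
          nlinarith [mul_nonneg (mul_pos hKc hM2).le (sub_nonneg.2 h1)]
  have hcC2 : ContDiffOn ℝ 2 c W := by
    rw [hc]
    exact (contDiffOn_const.mul hm).mul
      (hz.rpow_const_of_ne (fun q hq => (hzpos q hq).ne'))
  obtain ⟨CL, hCL⟩ : ∃ CL, ∀ pt ∈ Set.Icc (0:ℝ) T ×ˢ
      Metric.closedBall Astar (Kc * M2 * ZU ^ ((γ + 1) / (γ - 1)) * T),
      ‖fderiv ℝ c pt‖ ≤ CL := by
    apply IsCompact.exists_bound_of_continuousOn (isCompact_Icc.prod (isCompact_closedBall _ _))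
    exact (hcC2.continuousOn_fderiv_of_isOpen hW one_le_two).mono
      (fun q hq => hWT (Set.mem_prod.2 ⟨hq.1, Set.mem_univ _⟩))
  have hRR : ((Real.toNNReal (Kc * M2 * ZU ^ ((γ + 1) / (γ - 1)) * T) : ℝ))
      = Kc * M2 * ZU ^ ((γ + 1) / (γ - 1)) * T := Real.coe_toNNReal _ (mul_pos hCB0 hT).le
  have hCC : ((Real.toNNReal (Kc * M2 * ZU ^ ((γ + 1) / (γ - 1))) : ℝ))
      = Kc * M2 * ZU ^ ((γ + 1) / (γ - 1)) := Real.coe_toNNReal _ hCB0.le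
  have hpl : IsPicardLindelof (fun t x => c (t, x)) (tmin := 0) (tmax := T) ⟨0, h0T⟩ Astar
      (Real.toNNReal (Kc * M2 * ZU ^ ((γ + 1) / (γ - 1)) * T)) 0
      (Real.toNNReal (Kc * M2 * ZU ^ ((γ + 1) / (γ - 1)))) (Real.toNNReal (max CL 0)) := by
    refine ⟨?_, ?_, ?_, ?_⟩
    · intro t' ht'
      rw [hRR]
      apply (convex_closedBall _ _).lipschitzOnWith_of_nnnorm_hasFDerivWithin_le
        (f' := fun x => (fderiv ℝ c (t', x)).comp
          ((0 : ℝ →L[ℝ] ℝ).prod (ContinuousLinearMap.id ℝ ℝ)))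
      · intro x hx
        have hd := (hcC2.contDiffAt (hW.mem_nhds (hmemTW t' ht' x))).differentiableAt two_ne_zero
        exact (hd.hasFDerivAt.comp x
          ((hasFDerivAt_const t' x).prodMk (hasFDerivAt_id x))).hasFDerivWithinAt
      · intro x hx
        rw [← NNReal.coe_le_coe, coe_nnnorm, Real.coe_toNNReal _ (le_max_right CL 0)]
        apply ContinuousLinearMap.opNorm_le_bound _ (le_max_right CL 0)
        intro v
        have hev : ((fderiv ℝ c (t', x)).comp
            ((0 : ℝ →L[ℝ] ℝ).prod (ContinuousLinearMap.id ℝ ℝ))) v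
            = fderiv ℝ c (t', x) (0, v) := by
          simp
        rw [hev]
        calc ‖fderiv ℝ c (t', x) (0, v)‖ ≤ ‖fderiv ℝ c (t', x)‖ * ‖((0:ℝ), v)‖ :=
              (fderiv ℝ c (t', x)).le_opNorm _
          _ = ‖fderiv ℝ c (t', x)‖ * ‖v‖ := by
              rw [Prod.norm_def]
              simp [max_eq_right (norm_nonneg v)]
          _ ≤ max CL 0 * ‖v‖ :=
              mul_le_mul_of_nonneg_right
                (le_trans (hCL _ (Set.mem_prod.2 ⟨ht', hx⟩)) (le_max_left _ _))
                (norm_nonneg v)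
    · intro x hx
      exact (hcC2.continuousOn.comp ((continuous_id.prodMk continuous_const).continuousOn)
        (fun t' ht' => hmemTW t' ht' x))
    · intro t' ht' x hx
      rw [hCC, Real.norm_eq_abs, abs_of_pos (hcpos _ (hmemTW t' ht' x))]
      exact hCB t' ht' x
    · have hmx : max (T - 0) (0 - 0) = T := by
        rw [sub_zero, sub_self]
        exact max_eq_left hT.le
      show ((Real.toNNReal (Kc * M2 * ZU ^ ((γ + 1) / (γ - 1))) : ℝ)) * max (T - 0) (0 - 0)
        ≤ ((Real.toNNReal (Kc * M2 * ZU ^ ((γ + 1) / (γ - 1)) * T) : ℝ)) - ((0 : NNReal) : ℝ)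
      rw [hmx, hCC, hRR, NNReal.coe_zero, sub_zero]
  obtain ⟨X, hX0, hX⟩ := hpl.exists_eq_forall_mem_Icc_hasDerivWithinAt₀
  replace hX0 : X 0 = Astar := hX0
  have hXA : ∀ t ∈ Set.Icc (0:ℝ) T, A < X t := by
    have hXmono : MonotoneOn X (Set.Icc (0:ℝ) T) := by
      apply monotoneOn_of_deriv_nonneg (convex_Icc 0 T)
        (fun t ht => (hX t ht).continuousWithinAt)
      · intro t ht
        rw [interior_Icc] at ht
        exact ((hX t (Set.Ioo_subset_Icc_self ht)).hasDerivAt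
          (Icc_mem_nhds ht.1 ht.2)).differentiableAt.differentiableWithinAt
      · intro t ht
        rw [interior_Icc] at ht
        rw [((hX t (Set.Ioo_subset_Icc_self ht)).hasDerivAt (Icc_mem_nhds ht.1 ht.2)).deriv]
        exact (hcpos _ (hmemTW t (Set.Ioo_subset_Icc_self ht) (X t))).le
    intro t ht
    calc A < Astar := hAstar
      _ = X 0 := hX0.symm
      _ ≤ X t := hXmono h0T ht ht.1
  -- Part III : Riccati comparison along the characteristic
  have hgd : ∀ t ∈ Set.Icc (0:ℝ) T, HasDerivWithinAt (fun τ => yf (τ, X τ))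
      (pdt yf (t, X t) + c (t, X t) * pdx yf (t, X t)) (Set.Icc 0 T) t := by
    intro t ht
    have hptW : ((t, X t) : ℝ × ℝ) ∈ W := hmemTW t ht (X t)
    have hφ : HasDerivWithinAt (fun τ : ℝ => ((τ, X τ) : ℝ × ℝ)) (1, c (t, X t))
        (Set.Icc 0 T) t := (hasDerivAt_id t).hasDerivWithinAt.prodMk (hX t ht)
    have hcomp := (key3 _ hptW).hasFDerivAt.comp_hasDerivWithinAt t hφ
    have hval : fderiv ℝ yf (t, X t) (1, c (t, X t))
        = pdt yf (t, X t) + c (t, X t) * pdx yf (t, X t) := by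
      have hsplit : ((1:ℝ), c (t, X t)) = ((1:ℝ), (0:ℝ)) + c (t, X t) • ((0:ℝ), (1:ℝ)) := by
        simp [Prod.ext_iff]
      rw [hsplit, map_add, map_smul, smul_eq_mul]
      rfl
    rw [hval] at hcomp
    exact hcomp
  have hRic : ∀ t ∈ Set.Icc (0:ℝ) T, pdt yf (t, X t) + c (t, X t) * pdx yf (t, X t)
      ≤ -δ * yf (t, X t) ^ 2 := by
    intro t ht
    have hptW : ((t, X t) : ℝ × ℝ) ∈ W := hmemTW t ht (X t)
    have hptP : ((t, X t) : ℝ × ℝ) ∈ Set.Icc (0:ℝ) T ×ˢ (Set.univ : Set ℝ) :=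
      Set.mem_prod.2 ⟨ht, Set.mem_univ _⟩
    rw [key1 _ hptW]
    have hent := key2 t ht (X t) (hXA t ht)
    have ha2d := hδa2 _ hptP
    have hZ : 0 < z (t, X t) := hzpos _ hptW
    have hM : 0 < m (t, X t) := hmpos _ hptW
    have hCE : 0 ≤ (γ - 1) / (2 * γ) * Kc
        * (m (t, X t) * m (t, X t) * m (t, X t) ^ eE / m (t, X t) ^ κ)
        * (z (t, X t) ^ b * z (t, X t) ^ b * z (t, X t) ^ b * z (t, X t)) := by positivity
    nlinarith [mul_nonneg (by linarith : (0:ℝ) ≤ -a2 (t, X t) - δ) (sq_nonneg (yf (t, X t))),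
      mul_nonneg hCE hent]
  have hgneg : ∀ t ∈ Set.Icc (0:ℝ) T, yf (t, X t) ≤ yf (0, Astar) := by
    have hanti : AntitoneOn (fun τ => yf (τ, X τ)) (Set.Icc (0:ℝ) T) := by
      apply antitoneOn_of_deriv_nonpos (convex_Icc 0 T)
        (fun t ht => (hgd t ht).continuousWithinAt)
      · intro t ht
        rw [interior_Icc] at ht
        exact ((hgd t (Set.Ioo_subset_Icc_self ht)).hasDerivAt
          (Icc_mem_nhds ht.1 ht.2)).differentiableAt.differentiableWithinAt
      · intro t ht
        rw [interior_Icc] at ht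
        have htI := Set.Ioo_subset_Icc_self ht
        rw [((hgd t htI).hasDerivAt (Icc_mem_nhds ht.1 ht.2)).deriv]
        have h1 := hRic t htI
        nlinarith [mul_nonneg hδ.le (sq_nonneg (yf (t, X t)))]
    intro t ht
    have h := hanti h0T ht ht.1
    simpa [hX0] using h
  have hyneg : ∀ t ∈ Set.Icc (0:ℝ) T, yf (t, X t) < 0 :=
    fun t ht => lt_of_le_of_lt (hgneg t ht) hy0
  have hmono2 : MonotoneOn (fun t => (yf (t, X t))⁻¹ - δ * t) (Set.Icc (0:ℝ) T) := by
    apply monotoneOn_of_deriv_nonneg (convex_Icc 0 T)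
    · intro t ht
      exact (((hgd t ht).inv (hyneg t ht).ne).sub
        ((hasDerivWithinAt_id t _).const_mul δ)).continuousWithinAt
    · intro t ht
      rw [interior_Icc] at ht
      have htI := Set.Ioo_subset_Icc_self ht
      exact (((((hgd t htI).hasDerivAt (Icc_mem_nhds ht.1 ht.2)).inv (hyneg t htI).ne).sub
        ((hasDerivAt_id t).const_mul δ))).differentiableAt.differentiableWithinAt
    · intro t ht
      rw [interior_Icc] at ht
      have htI := Set.Ioo_subset_Icc_self ht
      have hne : yf (t, X t) ≠ 0 := (hyneg t htI).ne
      have hD : HasDerivAt (fun τ => (yf (τ, X τ))⁻¹ - δ * τ)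
          (-(pdt yf (t, X t) + c (t, X t) * pdx yf (t, X t)) / yf (t, X t) ^ 2 - δ * 1) t :=
        ((((hgd t htI).hasDerivAt (Icc_mem_nhds ht.1 ht.2)).inv hne).sub
          ((hasDerivAt_id t).const_mul δ))
      rw [hD.deriv]
      have h1 := hRic t htI
      have h2 : 0 < yf (t, X t) ^ 2 :=
        lt_of_le_of_ne (sq_nonneg _) (Ne.symm (pow_ne_zero 2 hne))
      rw [le_sub_iff_add_le, zero_add, le_div_iff₀ h2]
      nlinarith [h1]
  have hfinal := hmono2 h0T ⟨hT.le, le_rfl⟩ hT.le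
  simp only [hX0, mul_zero, sub_zero] at hfinal
  have hinvT : (yf (T, X T))⁻¹ < 0 := inv_lt_zero.2 (hyneg T ⟨hT.le, le_rfl⟩)
  have hkey : (yf (0, Astar))⁻¹ + δ * T < 0 := by linarith
  have hrw : -(1 / (yf (0, Astar) * δ)) = (-(yf (0, Astar))⁻¹) / δ := by
    field_simp
  rw [hrw, lt_div_iff₀ hδ]
  have : 0 < -(yf (0, Astar))⁻¹ - δ * T := by linarith
  linarith
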